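/- If f_1,...,f_n : X → Y are maps and {U_0,...,U_k} is any open cover of X, then D(f_1,...,f_n) ≤ Σ_{i=0}^{k} D(f_1|_{U_i},...,f_n|_{U_i}) + k. -/

import Mathlib

open Set

/-- The `n`-th homotopic distance of maps `f 0, …, f (n-1) : X → Y`:
the least `k` admitting an open cover `U 0, …, U k` of `X` on each element of
which all the maps are pairwise homotopic; `∞` if no such cover exists. -/
noncomputable def homDist {X Y : Type*} [TopologicalSpace X] [TopologicalSpace Y]
    {n : ℕ} (f : Fin n → C(X, Y)) : ℕ∞ :=
  sInf ((fun k : ℕ => (k : ℕ∞)) '' {k | ∃ U : Fin (k + 1) → Set X,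
    (∀ j, IsOpen (U j)) ∧ (⋃ j, U j) = Set.univ ∧
    ∀ j i i', ((f i).restrict (U j)).Homotopic ((f i').restrict (U j))})

lemma homDist_le {X Y : Type*} [TopologicalSpace X] [TopologicalSpace Y]
    {n : ℕ} (f : Fin n → C(X, Y)) {m : ℕ}
    (h : ∃ U : Fin (m + 1) → Set X,
      (∀ j, IsOpen (U j)) ∧ (⋃ j, U j) = Set.univ ∧
      ∀ j i i', ((f i).restrict (U j)).Homotopic ((f i').restrict (U j))) :
    homDist f ≤ m :=
  sInf_le ⟨m, h, rfl⟩

lemma homDist_mem {X Y : Type*} [TopologicalSpace X] [TopologicalSpace Y]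
    {n : ℕ} (f : Fin n → C(X, Y)) (h : homDist f ≠ ⊤) :
    ∃ m : ℕ, (m : ℕ∞) = homDist f ∧ ∃ U : Fin (m + 1) → Set X,
      (∀ j, IsOpen (U j)) ∧ (⋃ j, U j) = Set.univ ∧
      ∀ j i i', ((f i).restrict (U j)).Homotopic ((f i').restrict (U j)) := by
  set T : Set ℕ := {k | ∃ U : Fin (k + 1) → Set X,
    (∀ j, IsOpen (U j)) ∧ (⋃ j, U j) = Set.univ ∧
    ∀ j i i', ((f i).restrict (U j)).Homotopic ((f i').restrict (U j))} with hT
  have hTne : T.Nonempty := by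
    by_contra hc
    rw [Set.not_nonempty_iff_eq_empty] at hc
    apply h
    simp [homDist, ← hT, hc]
  refine ⟨sInf T, ?_, Nat.sInf_mem hTne⟩
  apply le_antisymm
  · apply le_sInf
    rintro x ⟨j, hj, rfl⟩
    show ((sInf T : ℕ) : ℕ∞) ≤ (j : ℕ∞)
    exact Nat.cast_le.mpr (Nat.sInf_le hj)
  · exact sInf_le ⟨sInf T, Nat.sInf_mem hTne, rfl⟩

lemma homotopic_restrict_image {X Y : Type*} [TopologicalSpace X] [TopologicalSpace Y]
    {U : Set X} {g g' : C(X, Y)} {V : Set ↥U}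
    (h : ((g.restrict U).restrict V).Homotopic ((g'.restrict U).restrict V)) :
    (g.restrict (Subtype.val '' V)).Homotopic (g'.restrict (Subtype.val '' V)) := by
  have h1 : ∀ x : ↥(Subtype.val '' V), (x : X) ∈ U := by
    rintro ⟨x, a, ha, rfl⟩; exact a.2
  have h2 : ∀ x : ↥(Subtype.val '' V), (⟨(x : X), h1 x⟩ : ↥U) ∈ V := by
    rintro ⟨x, a, ha, rfl⟩; exact ha
  let φfun : ↥(Subtype.val '' V) → ↥V := fun x => ⟨⟨(x : X), h1 x⟩, h2 x⟩
  have hφ : Continuous φfun := by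
    apply Continuous.subtype_mk
    apply Continuous.subtype_mk
    exact continuous_subtype_val
  let φ : C(↥(Subtype.val '' V), ↥V) := ⟨φfun, hφ⟩
  have := ContinuousMap.Homotopic.comp h (ContinuousMap.Homotopic.refl φ)
  have e1 : ((g.restrict U).restrict V).comp φ = g.restrict (Subtype.val '' V) := by
    ext x; rfl
  have e2 : ((g'.restrict U).restrict V).comp φ = g'.restrict (Subtype.val '' V) := by
    ext x; rfl
  rwa [e1, e2] at this

/-- For any open cover `{U₀, …, U_k}` of `X`,
`D(f₁, …, fₙ) ≤ ∑ᵢ D(f₁|_{Uᵢ}, …, fₙ|_{Uᵢ}) + k`. -/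
theorem homDist_le_sum_restrict {X Y : Type*} [TopologicalSpace X] [TopologicalSpace Y]
    {n k : ℕ} (f : Fin n → C(X, Y)) (U : Fin (k + 1) → Set X)
    (hUopen : ∀ i, IsOpen (U i)) (hUcover : (⋃ i, U i) = Set.univ) :
    homDist f ≤ (∑ i : Fin (k + 1), homDist (fun l => (f l).restrict (U i))) + k := by
  by_cases hfin : ∀ i, homDist (fun l => (f l).restrict (U i)) ≠ ⊤
  · choose m hm hcov using fun i => homDist_mem _ (hfin i)
    choose V hVopen hVcover hVhom using hcov
    set N : ℕ := (∑ i : Fin (k + 1), m i) + k with hN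
    have hcard : Fintype.card (Σ i : Fin (k + 1), Fin (m i + 1)) = N + 1 := by
      simp [Fintype.card_sigma, Finset.sum_add_distrib, hN]
      omega
    let e : Fin (N + 1) ≃ Σ i : Fin (k + 1), Fin (m i + 1) :=
      (Fintype.equivFinOfCardEq hcard).symm
    have key : homDist f ≤ (N : ℕ∞) := by
      apply homDist_le
      refine ⟨fun j => Subtype.val '' V (e j).1 (e j).2, ?_, ?_, ?_⟩
      · intro j
        exact (hUopen (e j).1).isOpenMap_subtype_val _ (hVopen (e j).1 (e j).2)
      · apply Set.eq_univ_of_forall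
        intro x
        have hx : x ∈ ⋃ i, U i := hUcover ▸ Set.mem_univ x
        obtain ⟨i, hi⟩ := Set.mem_iUnion.mp hx
        have hx2 : (⟨x, hi⟩ : ↥(U i)) ∈ ⋃ j, V i j := (hVcover i) ▸ Set.mem_univ _
        obtain ⟨j, hj⟩ := Set.mem_iUnion.mp hx2
        apply Set.mem_iUnion.mpr
        refine ⟨e.symm ⟨i, j⟩, ?_⟩
        have he : e (e.symm ⟨i, j⟩) = ⟨i, j⟩ := e.apply_symm_apply _
        rw [he]
        exact ⟨⟨x, hi⟩, hj, rfl⟩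
      · intro j i i'
        exact homotopic_restrict_image (hVhom (e j).1 (e j).2 i i')
    refine key.trans ?_
    have : ((N : ℕ) : ℕ∞) = (∑ i : Fin (k + 1), (m i : ℕ∞)) + (k : ℕ∞) := by
      rw [hN]; push_cast; rfl
    rw [this]
    gcongr with i _
    exact le_of_eq (hm i)
  · push_neg at hfin
    obtain ⟨i, hi⟩ := hfin
    have : (⊤ : ℕ∞) ≤ ∑ i : Fin (k + 1), homDist (fun l => (f l).restrict (U i)) := by
      rw [← hi]
      exact Finset.single_le_sum
        (f := fun i => homDist fun l => (f l).restrict (U i))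
        (fun _ _ => zero_le) (Finset.mem_univ i)
    exact le_top.trans (this.trans le_self_add)
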